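/- arXiv:1606.05271 — 4 statements merged into one kernel-verified Lean document; each statement's English description precedes it below -/
import Mathlib

section
/- For a finite field F_q of characteristic p and any k ≥ 1, the polynomial P_k(T) = Σ_{r ∈ F_q} (T+r)^k in F_q[T] equals -Σ_{γ = ⌊k/q⌋+1}^{⌊k/(q-1)⌋} C(γ-1, k-(q-1)γ) (T^q - T)^{k-(q-1)γ}, and in particular is a polynomial in T^q - T with coefficients in the prime field F_p. -/
open Polynomial

private lemma psum_ext {R : Type*} [CommRing R] (u : R) (q j : ℕ) (hq : 2 ≤ q) :
    ∑ γ ∈ Finset.Icc (j / q + 1) (j / (q - 1)),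
        ((γ - 1).choose (j - (q - 1) * γ) : R) * u ^ (j - (q - 1) * γ)
      = ∑ i ∈ Finset.range (j / (q - 1)),
        ((i).choose (j - (q - 1) * (i + 1)) : R) * u ^ (j - (q - 1) * (i + 1)) := by
  rw [show Finset.Icc (j / q + 1) (j / (q - 1))
      = (Finset.Icc 1 (j / (q - 1))).filter (fun γ => j / q + 1 ≤ γ) from ?_]
  · rw [Finset.sum_filter]
    rw [← Finset.Ico_add_one_right_eq_Icc, Finset.sum_Ico_eq_sum_range]
    apply Finset.sum_congr rfl
    intro i _
    rw [show (1 : ℕ) + i = i + 1 from by omega, Nat.add_sub_cancel]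
    by_cases h : j / q + 1 ≤ i + 1
    · rw [if_pos h]
    · rw [if_neg h]
      -- here i + 1 ≤ j / q, so (i+1) * q ≤ j and the binomial vanishes
      have h1 : i + 1 ≤ j / q := by omega
      have h2 : (i + 1) * q ≤ j := (Nat.le_div_iff_mul_le (by omega)).1 h1
      have h3 : (q - 1) * (i + 1) + (i + 1) = (i + 1) * q := by
        have hq1 : q - 1 + 1 = q := by omega
        calc (q - 1) * (i + 1) + (i + 1) = (q - 1 + 1) * (i + 1) := by ring
        _ = q * (i + 1) := by rw [hq1]
        _ = (i + 1) * q := by ring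
      have h4 : i < j - (q - 1) * (i + 1) := by omega
      rw [Nat.choose_eq_zero_of_lt h4]
      simp
  · ext γ
    simp only [Finset.mem_Icc, Finset.mem_filter]
    constructor
    · rintro ⟨h1, h2⟩
      exact ⟨⟨le_trans (Nat.le_add_left 1 _) h1, h2⟩, h1⟩
    · rintro ⟨⟨_, h2⟩, h1⟩
      exact ⟨h1, h2⟩

private lemma psum_rec {R : Type*} [CommRing R] (u : R) (q k : ℕ) (hq : 2 ≤ q) (hk : q ≤ k) :
    ∑ γ ∈ Finset.Icc (k / q + 1) (k / (q - 1)),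
        ((γ - 1).choose (k - (q - 1) * γ) : R) * u ^ (k - (q - 1) * γ)
      = u * ∑ γ ∈ Finset.Icc ((k - q) / q + 1) ((k - q) / (q - 1)),
          ((γ - 1).choose (k - q - (q - 1) * γ) : R) * u ^ (k - q - (q - 1) * γ)
        + ∑ γ ∈ Finset.Icc ((k - q + 1) / q + 1) ((k - q + 1) / (q - 1)),
          ((γ - 1).choose (k - q + 1 - (q - 1) * γ) : R) * u ^ (k - q + 1 - (q - 1) * γ) := by
  rw [psum_ext u q k hq, psum_ext u q (k - q) hq, psum_ext u q (k - q + 1) hq]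
  set n := q - 1 with hn
  have hn1 : 1 ≤ n := by omega
  set U := k / n with hU
  set V := (k - q) / n with hV
  have hmod : n * U + k % n = k := Nat.div_add_mod k n
  have hmlt : k % n < n := Nat.mod_lt k (by omega)
  have hUk : n * U ≤ k ∧ k < n * U + n := by constructor <;> omega
  have hU1 : 1 ≤ U := by
    rcases Nat.eq_zero_or_pos U with h | h
    · exfalso
      rw [h, Nat.mul_zero] at hUk
      omega
    · exact h
  have hmodV : n * V + (k - q) % n = k - q := Nat.div_add_mod (k - q) n
  have hmVlt : (k - q) % n < n := Nat.mod_lt _ (by omega)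
  have hVk : n * V ≤ k - q ∧ k - q < n * V + n := by constructor <;> omega
  have hmulU : n * (U - 1) + n = n * U := by
    rw [← Nat.mul_succ]
    have hs : (U - 1).succ = U := by omega
    rw [hs]
  -- upper index for third sum is U - 1
  have hU2 : (k - q + 1) / n = U - 1 := by
    apply Nat.div_eq_of_lt_le
    · rw [Nat.mul_comm]
      omega
    · rw [Nat.mul_comm, Nat.mul_succ]
      omega
  have hVU : V ≤ U - 1 := by
    by_contra hcon
    have h1 : U ≤ V := by omega
    have h2 : n * U ≤ n * V := Nat.mul_le_mul_left n h1
    omega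
  rw [hU2]
  -- expand the first sum of the LHS: drop the first term (which is zero)
  have hUsplit : U = (U - 1) + 1 := by omega
  rw [hUsplit, Finset.sum_range_succ']
  simp only [Nat.add_sub_cancel]
  have hzero : ((Nat.choose 0 (k - n * (0 + 1)) : R) * u ^ (k - n * (0 + 1))) = 0 := by
    rw [show n * (0 + 1) = n from by ring]
    have : 0 < k - n := by omega
    rw [Nat.choose_eq_zero_of_lt this]
    simp
  rw [hzero, add_zero]
  -- rewrite u * (second sum) as a sum of Pascal-differences, extended to range (U-1)
  have key : u * ∑ i ∈ Finset.range V,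
        ((i).choose (k - q - n * (i + 1)) : R) * u ^ (k - q - n * (i + 1))
      = ∑ i ∈ Finset.range (U - 1),
        (((i + 1).choose (k - n * (i + 1 + 1)) : R) - ((i).choose (k - n * (i + 1 + 1)) : R))
          * u ^ (k - n * (i + 1 + 1)) := by
    rw [Finset.mul_sum]
    rw [← Finset.sum_subset (Finset.range_subset_range.2 hVU)
      (f := fun i => (((i + 1).choose (k - n * (i + 1 + 1)) : R)
          - ((i).choose (k - n * (i + 1 + 1)) : R)) * u ^ (k - n * (i + 1 + 1)))]
    · apply Finset.sum_congr rfl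
      intro i hi
      rw [Finset.mem_range] at hi
      have hi1 : i + 1 ≤ V := hi
      have h2 : n * (i + 1) ≤ n * V := Nat.mul_le_mul_left n hi1
      have h3 : n * (i + 1) ≤ k - q := le_trans h2 hVk.1
      set m := k - n * (i + 1 + 1) with hm
      have hm1 : 1 ≤ m := by
        have : n * (i + 1 + 1) = n * (i + 1) + n := by ring
        omega
      have hsub : k - q - n * (i + 1) = m - 1 := by
        have : n * (i + 1 + 1) = n * (i + 1) + n := by ring
        omega
      have hpow : m - 1 + 1 = m := by omega
      have hpascal : (i + 1).choose m = i.choose (m - 1) + i.choose m := by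
        conv_lhs => rw [← hpow]
        rw [Nat.choose_succ_succ', hpow]
      rw [hsub, hpascal]
      push_cast
      have hu : u ^ m = u ^ (m - 1) * u := by rw [← pow_succ, hpow]
      rw [hu]
      ring
    · intro i hi hiV
      rw [Finset.mem_range] at hi hiV
      have h1 : V ≤ i := by omega
      have h2 : n * (V + 1) ≤ n * (i + 1) := Nat.mul_le_mul_left n (by omega)
      have h2' : n * V + n ≤ n * (i + 1) := by
        rw [Nat.mul_succ] at h2
        exact h2
      have hm0 : k - n * (i + 1 + 1) = 0 := by
        have h5 : n * (i + 1 + 1) = n * (i + 1) + n := by ring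
        omega
      rw [hm0]
      simp
  rw [key, ← Finset.sum_add_distrib]
  apply Finset.sum_congr rfl
  intro i hi
  rw [Finset.mem_range] at hi
  have hi1 : i + 1 ≤ U - 1 := hi
  have h2 : n * (i + 1) ≤ n * (U - 1) := Nat.mul_le_mul_left n hi1
  have h3 : n * (U - 1) + n = n * U := by
    have : U - 1 + 1 = U := by omega
    calc n * (U - 1) + n = n * (U - 1 + 1) := by ring
    _ = n * U := by rw [this]
  have hsub : k - q + 1 - n * (i + 1) = k - n * (i + 1 + 1) := by
    have : n * (i + 1 + 1) = n * (i + 1) + n := by ring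
    omega
  rw [hsub]
  ring

private lemma sum_pow_card_sub_one (F : Type*) [Field F] [Fintype F] :
    ∑ r : F, r ^ (Fintype.card F - 1) = -1 := by
  classical
  have h2 : 2 ≤ Fintype.card F := Fintype.one_lt_card
  rw [← Finset.sum_subset (Finset.subset_univ (Finset.univ \ {(0 : F)}))]
  · have : ∀ x ∈ Finset.univ \ {(0 : F)}, x ^ (Fintype.card F - 1) = 1 := by
      intro x hx
      rw [Finset.mem_sdiff, Finset.mem_singleton] at hx
      exact FiniteField.pow_card_sub_one_eq_one x hx.2
    rw [Finset.sum_congr rfl this, Finset.sum_const, Finset.card_sdiff_of_subset (by simp),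
      Finset.card_univ, Finset.card_singleton, nsmul_one, Nat.cast_sub (by omega),
      FiniteField.cast_card_eq_zero, Nat.cast_one, zero_sub]
  · intro x _ hx
    have hx0 : x = 0 := by
      by_contra h
      exact hx (by simp [h])
    rw [hx0, zero_pow (by omega)]

theorem power_sum_poly_finite_field (F : Type*) [Field F] [Fintype F]
    (p : ℕ) [CharP F p] (k : ℕ) (hk : 1 ≤ k) (q : ℕ) (hq : q = Fintype.card F) :
    ∑ r : F, (X + C r) ^ k =
      - ∑ γ ∈ Finset.Icc (k / q + 1) (k / (q - 1)),
          (((γ - 1).choose (k - (q - 1) * γ) : F[X])) * (X ^ q - X) ^ (k - (q - 1) * γ) := by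
  subst hq
  set q := Fintype.card F with hq
  have hq2 : 2 ≤ q := Fintype.one_lt_card
  clear hk
  induction k using Nat.strong_induction_on with
  | _ k ih =>
  have small : ∀ m : ℕ, m ≤ q - 1 →
      ∑ r : F, (X + C r) ^ m = if m = q - 1 then -1 else 0 := by
    intro m hm
    have step1 : ∑ r : F, (X + C r) ^ m
        = ∑ j ∈ Finset.range (m + 1),
            X ^ j * C (∑ r : F, r ^ (m - j)) * (m.choose j : F[X]) := by
      simp_rw [add_pow]
      rw [Finset.sum_comm]
      apply Finset.sum_congr rfl
      intro j _
      rw [map_sum, Finset.mul_sum, Finset.sum_mul]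
      apply Finset.sum_congr rfl
      intro r _
      rw [C_pow]
    rw [step1]
    by_cases hcase : m = q - 1
    · rw [if_pos hcase]
      rw [Finset.sum_eq_single 0]
      · rw [Nat.sub_zero, hcase, sum_pow_card_sub_one F, pow_zero, Nat.choose_zero_right]
        simp
      · intro j hj hj0
        rw [Finset.mem_range] at hj
        have : m - j < q - 1 := by omega
        rw [FiniteField.sum_pow_lt_card_sub_one F (m - j) this]
        simp
      · intro h
        exact absurd (Finset.mem_range.2 (by omega)) h
    · rw [if_neg hcase]
      apply Finset.sum_eq_zero
      intro j _
      have : m - j < q - 1 := by omega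
      rw [FiniteField.sum_pow_lt_card_sub_one F (m - j) this]
      simp
  rcases lt_trichotomy k (q - 1) with hlt | heq | hgt
  · -- small case : k < q - 1, both sides are 0
    rw [small k (by omega), if_neg (by omega)]
    rw [Nat.div_eq_of_lt hlt, Finset.Icc_eq_empty (Nat.not_succ_le_zero _), Finset.sum_empty, neg_zero]
  · -- boundary case : k = q - 1
    rw [small k (le_of_eq heq), if_pos heq]
    have h1 : k / q = 0 := Nat.div_eq_of_lt (by omega)
    have h2 : k / (q - 1) = 1 := by rw [heq]; exact Nat.div_self (by omega)
    rw [h1, h2, zero_add, Finset.Icc_self, Finset.sum_singleton]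
    have h3 : k - (q - 1) * 1 = 0 := by omega
    rw [h3]
    simp
  · -- main case : q ≤ k
    have hge : q ≤ k := by omega
    obtain ⟨n, hp, hcard⟩ := FiniteField.card F p
    haveI : Fact p.Prime := ⟨hp⟩
    have frob : ∀ r : F, (X + C r) ^ q = X ^ q + C r := by
      intro r
      conv_lhs => rw [hq, hcard]
      rw [add_pow_char_pow, ← C_pow, ← hcard, ← hq, FiniteField.pow_card]
    have step : ∑ r : F, (X + C r) ^ k
        = (X ^ q - X) * ∑ r : F, (X + C r) ^ (k - q) + ∑ r : F, (X + C r) ^ (k - q + 1) := by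
      rw [Finset.mul_sum, ← Finset.sum_add_distrib]
      apply Finset.sum_congr rfl
      intro r _
      have h1 : (X + C r) ^ k = (X + C r) ^ (k - q) * (X + C r) ^ q := by
        rw [← pow_add]
        congr 1
        omega
      rw [h1, frob r, pow_succ]
      ring
    rw [step, ih (k - q) (by omega), ih (k - q + 1) (by omega),
      psum_rec (X ^ q - X) q k hq2 hge]
    ring
end

section
/- Let R be a finite (possibly non-commutative) unital ring of odd prime characteristic p, and suppose R contains a nonzero two-sided ideal I with I² = 0. Then for every k ≥ 1, the sum Σ_{r ∈ R} r^k equals 0. -/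
open Finset

private theorem myexpand {R : Type*} [Ring R] (I : TwoSidedIdeal R)
    (hsq : ∀ x y : R, x ∈ I → y ∈ I → x * y = 0)
    (r a : R) (ha : a ∈ I) :
    ∀ n : ℕ, (r + a) ^ (n+1) = r ^ (n+1) + ∑ i ∈ range (n+1), r ^ i * a * r ^ (n - i) := by
  intro n
  induction n with
  | zero => simp
  | succ n ih =>
    have h0 : ∀ i ∈ range (n+1), (r ^ i * a * r ^ (n - i)) * a = 0 := by
      intro i _
      exact hsq _ _ (I.mul_mem_right _ _ (I.mul_mem_left _ _ ha)) ha
    have hSa : (∑ i ∈ range (n+1), r ^ i * a * r ^ (n - i)) * a = 0 := by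
      rw [Finset.sum_mul]
      exact Finset.sum_eq_zero h0
    have hSr : (∑ i ∈ range (n+1), r ^ i * a * r ^ (n - i)) * r
        = ∑ i ∈ range (n+1), r ^ i * a * r ^ (n + 1 - i) := by
      rw [Finset.sum_mul]
      refine Finset.sum_congr rfl fun i hi => ?_
      rw [mem_range] at hi
      rw [mul_assoc, ← pow_succ]
      congr 2
      omega
    rw [pow_succ, ih, add_mul, mul_add, mul_add, hSa, hSr, ← pow_succ]
    conv_rhs => rw [Finset.sum_range_succ]
    simp only [Nat.sub_self, pow_zero, mul_one]
    abel

theorem power_sum_vanishes_square_zero_ideal_odd_char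
    (R : Type*) [Ring R] [Fintype R] (p : ℕ) [CharP R p] (hp : p.Prime) (hodd : Odd p)
    (I : TwoSidedIdeal R) (hI : I ≠ ⊥)
    (hsq : ∀ x y : R, x ∈ I → y ∈ I → x * y = 0)
    (k : ℕ) (hk : 1 ≤ k) :
    ∑ r : R, r ^ k = 0 := by
  classical
  haveI : Fact p.Prime := ⟨hp⟩
  obtain ⟨n, rfl⟩ : ∃ n, k = n + 1 := ⟨k - 1, by omega⟩
  -- a nonzero element of I
  obtain ⟨a0, ha0I, ha0⟩ : ∃ a0 ∈ I, a0 ≠ 0 := by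
    by_contra h
    push_neg at h
    apply hI
    ext x
    simp only [TwoSidedIdeal.mem_bot]
    exact ⟨fun hx => h x hx, fun hx => hx ▸ I.zero_mem⟩
  -- the additive subgroup underlying I
  set A : AddSubgroup R :=
    { carrier := {x | x ∈ I}
      add_mem' := fun hx hy => I.add_mem hx hy
      zero_mem' := I.zero_mem
      neg_mem' := fun hx => I.neg_mem hx } with hA
  have memA : ∀ x : R, x ∈ A ↔ x ∈ I := fun x => Iff.rfl
  -- halving: x + x = 0 → x = 0
  obtain ⟨m, hm⟩ := hodd
  have halfkill : ∀ x : R, x + x = 0 → x = 0 := by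
    intro x hx
    have hp0 : (p : R) = 0 := CharP.cast_eq_zero R p
    have : p • x = 0 := by rw [nsmul_eq_mul, hp0, zero_mul]
    have h2 : (2 * m) • x = 0 := by
      rw [mul_comm, mul_smul, two_smul, hx, smul_zero]
    rw [hm, add_smul, h2, one_smul, zero_add] at this
    exact this
  -- sum of all elements of A is zero
  have hsumA : ∑ a : A, (a : R) = 0 := by
    have h1 : ∑ a : A, ((Equiv.neg A a : A) : R) = ∑ a : A, (a : R) :=
      Equiv.sum_comp (Equiv.neg A) (fun a : A => (a : R))
    simp only [Equiv.neg_apply, AddSubgroup.coe_neg, Finset.sum_neg_distrib] at h1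
    apply halfkill
    nth_rewrite 1 [← h1]
    exact neg_add_cancel _
  -- card A is divisible by p
  have hcard : (Fintype.card A : R) = 0 := by
    rw [CharP.cast_eq_zero_iff R p]
    have h1 : addOrderOf (⟨a0, ha0I⟩ : A) = p := by
      apply addOrderOf_eq_prime
      · ext
        show p • a0 = 0
        rw [nsmul_eq_mul, CharP.cast_eq_zero R p, zero_mul]
      · exact fun h => ha0 (by simpa [Subtype.ext_iff] using h)
    rw [← h1]
    exact addOrderOf_dvd_card
  -- the fiber sum vanishes
  have hfiber : ∀ r : R, ∑ a : A, (r + (a : R)) ^ (n + 1) = 0 := by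
    intro r
    have h1 : ∀ a : A, (r + (a : R)) ^ (n + 1)
        = r ^ (n+1) + ∑ i ∈ range (n+1), r ^ i * (a : R) * r ^ (n - i) :=
      fun a => myexpand I hsq r a a.2 n
    rw [Finset.sum_congr rfl (fun a _ => h1 a), Finset.sum_add_distrib,
      Finset.sum_const, card_univ, Finset.sum_comm]
    have h2 : ∀ i ∈ range (n+1), ∑ a : A, r ^ i * (a : R) * r ^ (n - i)
        = r ^ i * (∑ a : A, (a : R)) * r ^ (n - i) := by
      intro i _
      rw [Finset.mul_sum, Finset.sum_mul]
    rw [Finset.sum_congr rfl h2, hsumA]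
    simp [nsmul_eq_mul, hcard]
  -- assemble via fibers of the quotient map
  haveI : Fintype (R ⧸ A) := Fintype.ofFinite _
  rw [← Fintype.sum_fiberwise (QuotientAddGroup.mk : R → R ⧸ A) (fun r => r ^ (n+1))]
  refine Finset.sum_eq_zero fun y _ => ?_
  let e : A ≃ {r : R // (QuotientAddGroup.mk r : R ⧸ A) = y} :=
    { toFun := fun a => ⟨Quotient.out y + (a : R), by
        calc ((Quotient.out y + (a : R) : R) : R ⧸ A)
            = ((Quotient.out y : R) : R ⧸ A) := by
              rw [QuotientAddGroup.eq_iff_sub_mem]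
              simp [a.2]
          _ = y := QuotientAddGroup.out_eq' y⟩
      invFun := fun r => ⟨(r : R) - Quotient.out y, by
        have h3 : (((r : R) : R) : R ⧸ A) = ((Quotient.out y : R) : R ⧸ A) := by
          rw [QuotientAddGroup.out_eq']; exact r.2
        exact (QuotientAddGroup.eq_iff_sub_mem).mp h3⟩
      left_inv := fun a => by ext; simp
      right_inv := fun r => by ext; simp }
  have := Equiv.sum_comp e (fun r : {r : R // (QuotientAddGroup.mk r : R ⧸ A) = y} => (r : R) ^ (n+1))
  rw [← this]
  simpa [e] using hfiber (Quotient.out y)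
end

section
/- Let R be a finite unital ring of characteristic 2 containing a two-sided ideal I with I² = 0 and |I| ≥ 4. Then for every k ≥ 1, the sum Σ_{r ∈ R} r^k equals 0. -/
lemma aux_sum_zmod2 (G : Type*) [AddCommGroup G] [Fintype G] [Module (ZMod 2) G]
    (h : 4 ≤ Fintype.card G) : (∑ x : G, x = 0) ∧ 2 ∣ Fintype.card G := by
  classical
  have : Module.Finite (ZMod 2) G := Module.Finite.of_finite
  set n := Module.finrank (ZMod 2) G with hn
  let e := (Module.finBasis (ZMod 2) G).equivFun
  have hcard : Fintype.card G = 2 ^ n := by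
    rw [Fintype.card_congr e.toEquiv]
    simp
    rfl
  have h2 : 2 ≤ n := by
    have h4 : (2:ℕ) ^ 2 ≤ 2 ^ n := by rw [← hcard]; exact h
    exact (Nat.pow_le_pow_iff_right one_lt_two).mp h4
  constructor
  · have key : ∑ v : Fin n → ZMod 2, v = 0 := by
      funext i
      simp only [Pi.zero_apply]
      rw [Finset.sum_apply]
      rw [Fintype.sum_equiv (Equiv.piSplitAt i (fun _ => ZMod 2))
        (fun v => v i) (fun p => p.1) (fun v => rfl)]
      rw [Fintype.sum_prod_type]
      simp only [Finset.sum_const, Finset.card_univ]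
      rw [← Finset.smul_sum]
      have hsum1 : ∑ t : ZMod 2, t = 1 := by decide
      rw [hsum1]
      have hc : Fintype.card ({j : Fin n // j ≠ i} → ZMod 2) = 2 ^ (n - 1) := by
        simp [Fintype.card_fun, Fintype.card_subtype_compl]
      rw [hc, nsmul_eq_mul, mul_one, Nat.cast_pow,
        show ((2:ℕ) : ZMod 2) = 0 by decide, zero_pow (by omega)]
    have he : e (∑ x : G, x) = 0 := by
      rw [map_sum]
      calc ∑ x : G, e x = ∑ v : Fin n → ZMod 2, v := Equiv.sum_comp e.toEquiv _root_.id
      _ = 0 := key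
    simpa using (LinearEquiv.map_eq_zero_iff e).mp he
  · rw [hcard]
    exact dvd_pow_self 2 (by omega)

lemma aux_pow_expand {R : Type*} [Ring R] (I : TwoSidedIdeal R)
    (hsq : ∀ x y : R, x ∈ I → y ∈ I → x * y = 0) (s x : R) (hx : x ∈ I) :
    ∀ k : ℕ, (s + x) ^ k = s ^ k + ∑ i ∈ Finset.range k, s ^ i * x * s ^ (k - 1 - i)
  | 0 => by simp
  | (k+1) => by
    rw [pow_succ, aux_pow_expand I hsq s x hx k, add_mul, mul_add, mul_add,
      Finset.sum_mul, Finset.sum_mul]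
    have h1 : ∑ i ∈ Finset.range k, s ^ i * x * s ^ (k - 1 - i) * x = 0 :=
      Finset.sum_eq_zero fun i _ =>
        hsq _ _ (I.mul_mem_right _ _ (I.mul_mem_left _ _ hx)) hx
    have h2 : ∑ i ∈ Finset.range k, s ^ i * x * s ^ (k - 1 - i) * s
        = ∑ i ∈ Finset.range k, s ^ i * x * s ^ (k + 1 - 1 - i) := by
      refine Finset.sum_congr rfl fun i hi => ?_
      rw [Finset.mem_range] at hi
      rw [mul_assoc, ← pow_succ]
      congr 2
      omega
    rw [h1, h2, Finset.sum_range_succ, ← pow_succ]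
    have : s ^ k * x * s ^ (k + 1 - 1 - k) = s ^ k * x := by
      norm_num
    rw [this]
    abel

theorem power_sum_vanishes_square_zero_ideal_char_two
    (R : Type*) [Ring R] [Fintype R] [CharP R 2]
    (I : TwoSidedIdeal R)
    (hsq : ∀ x y : R, x ∈ I → y ∈ I → x * y = 0)
    (hcard : 4 ≤ Nat.card {x : R // x ∈ I})
    (k : ℕ) (hk : 1 ≤ k) :
    ∑ r : R, r ^ k = 0 := by
  classical
  set A : AddSubgroup R :=
    { carrier := {x | x ∈ I}
      add_mem' := fun ha hb => I.add_mem ha hb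
      zero_mem' := I.zero_mem
      neg_mem' := fun ha => I.neg_mem ha } with hA
  letI : Module (ZMod 2) ↥A := AddCommGroup.zmodModule (by
    intro x
    ext
    push_cast
    show (2 • (x : R)) = 0
    rw [two_nsmul]
    exact CharTwo.add_self_eq_zero _)
  have hcardA : 4 ≤ Fintype.card ↥A := by
    rw [← Nat.card_eq_fintype_card]
    exact le_trans hcard (le_of_eq (Nat.card_congr (Equiv.subtypeEquivRight fun x => Iff.rfl)))
  obtain ⟨hsumA, hdvdA⟩ := aux_sum_zmod2 ↥A hcardA
  have hsumA' : ∑ x : ↥A, (x : R) = 0 := by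
    have := congrArg A.subtype hsumA
    simpa [map_sum] using this
  letI : Fintype (R ⧸ A) := Fintype.ofFinite _
  rw [← Fintype.sum_fiberwise (fun r : R => (QuotientAddGroup.mk r : R ⧸ A)) (fun r : R => r ^ k)]
  refine Finset.sum_eq_zero fun q _ => ?_
  set s : R := q.out with hs
  have hout : (QuotientAddGroup.mk s : R ⧸ A) = q := QuotientAddGroup.out_eq' q
  let e : ↥A ≃ {r : R // (QuotientAddGroup.mk r : R ⧸ A) = q} :=
    { toFun := fun x => ⟨s + (x : R), by
        have hx0 : (QuotientAddGroup.mk (x : R) : R ⧸ A) = 0 :=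
          (QuotientAddGroup.eq_zero_iff _).mpr x.2
        rw [QuotientAddGroup.mk_add, hx0, add_zero, hout]⟩
      invFun := fun r => ⟨(r : R) - s, by
        have h1 : (QuotientAddGroup.mk s : R ⧸ A) = QuotientAddGroup.mk (r : R) := by
          rw [hout, r.2]
        have h2 : -s + (r : R) ∈ A := QuotientAddGroup.eq.mp h1
        rw [sub_eq_add_neg, add_comm]
        exact h2⟩
      left_inv := fun x => by ext; simp
      right_inv := fun r => by ext; simp }
  have hfib : ∑ r : {r : R // (QuotientAddGroup.mk r : R ⧸ A) = q}, (r : R) ^ k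
      = ∑ x : ↥A, (s + (x : R)) ^ k :=
    (Equiv.sum_comp e fun r => (r : R) ^ k).symm
  rw [hfib]
  have hexp : ∀ x : ↥A,
      (s + (x : R)) ^ k = s ^ k + ∑ i ∈ Finset.range k, s ^ i * (x : R) * s ^ (k - 1 - i) :=
    fun x => aux_pow_expand I hsq s (x : R) x.2 k
  rw [Finset.sum_congr rfl fun x _ => hexp x, Finset.sum_add_distrib, Finset.sum_const,
    Finset.card_univ]
  have hzero1 : Fintype.card ↥A • s ^ k = 0 := by
    rw [nsmul_eq_mul, (CharP.cast_eq_zero_iff R 2 _).mpr hdvdA, zero_mul]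
  rw [hzero1, zero_add, Finset.sum_comm]
  refine Finset.sum_eq_zero fun i _ => ?_
  rw [← Finset.sum_mul, ← Finset.mul_sum, hsumA', mul_zero, zero_mul]
end

section
/- For the matrix ring R = M₂(F₂) and k ≥ 1, the sum Σ_{A ∈ R} A^k equals the identity matrix if k > 1 and k ≡ 0, 1, or 5 mod 6, and equals the zero matrix otherwise. -/
lemma key_M2F2 : ∀ A : Matrix (Fin 2) (Fin 2) (ZMod 2), A ^ 8 = A ^ 2 := by decide

theorem power_sum_M2_F2 (k : ℕ) (hk : 1 ≤ k) :
    ∑ A : Matrix (Fin 2) (Fin 2) (ZMod 2), A ^ k =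
      if 1 < k ∧ (k % 6 = 0 ∨ k % 6 = 1 ∨ k % 6 = 5) then 1 else 0 := by
  induction k using Nat.strong_induction_on with
  | _ k ih =>
    rcases Nat.lt_or_ge k 8 with h | h
    · interval_cases k <;> decide
    · obtain ⟨m, rfl⟩ : ∃ m, k = m + 6 := ⟨k - 6, by omega⟩
      have hm : 2 ≤ m := by omega
      have step : ∀ A : Matrix (Fin 2) (Fin 2) (ZMod 2), A ^ (m + 6) = A ^ m := by
        intro A
        have h1 : A ^ (m + 6) = A ^ (m - 2) * A ^ 8 := by
          rw [← pow_add]; congr 1; omega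
        rw [h1, key_M2F2, ← pow_add]; congr 1; omega
      simp_rw [step]
      rw [ih m (by omega) (by omega)]
      have hiff : (1 < m + 6 ∧ ((m + 6) % 6 = 0 ∨ (m + 6) % 6 = 1 ∨ (m + 6) % 6 = 5)) ↔
          (1 < m ∧ (m % 6 = 0 ∨ m % 6 = 1 ∨ m % 6 = 5)) := by omega
      simp only [hiff]
end
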